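/- Let η be the Minkowski form on ℝ^N and let K be a skew-symmetric real N×N matrix, regarded as a bivector (antisymmetric covariant bilinear form). Then η⁻¹K is nilpotent (equivalently, all zeroth-order invariants tr((η⁻¹K)^k), k ≥ 1, vanish) if and only if K is of alignment type II, i.e. there exist vectors x, y ∈ ℝ^N with xᵀ η⁻¹ x = 0 and xᵀ η⁻¹ y = 0 such that K = x yᵀ − y xᵀ. -/

import Mathlib

open Matrix

/-- The standard Minkowski diagonal matrix `diag(1,…,1,−1)` (N−1 positive squares,
one negative square). -/
def minkDiag (N : ℕ) : Matrix (Fin N) (Fin N) ℝ :=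
  Matrix.diagonal (fun i => if (i : ℕ) + 1 < N then 1 else -1)

variable {N : ℕ}

variable {N : ℕ}

lemma vmv_mul_vmv (a b c d : Fin N → ℝ) :
    vecMulVec a b * vecMulVec c d = (b ⬝ᵥ c) • vecMulVec a d := by
  ext i j
  simp only [mul_apply, vecMulVec_apply, Matrix.smul_apply, dotProduct, smul_eq_mul,
    Finset.sum_mul]
  exact Finset.sum_congr rfl fun k _ => by ring

lemma mul_vmv (M : Matrix (Fin N) (Fin N) ℝ) (a b : Fin N → ℝ) :
    M * vecMulVec a b = vecMulVec (M *ᵥ a) b := by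
  ext i j
  simp only [mul_apply, vecMulVec_apply, mulVec, dotProduct, Finset.sum_mul]
  exact Finset.sum_congr rfl fun k _ => by ring

lemma vmv_mul (M : Matrix (Fin N) (Fin N) ℝ) (a b : Fin N → ℝ) :
    vecMulVec a b * M = vecMulVec a (Mᵀ *ᵥ b) := by
  ext i j
  simp only [mul_apply, vecMulVec_apply, mulVec, dotProduct, transpose_apply, Finset.mul_sum]
  exact Finset.sum_congr rfl fun k _ => by ring

lemma vmv_transpose (a b : Fin N → ℝ) : (vecMulVec a b)ᵀ = vecMulVec b a := by
  ext i j; simp [vecMulVec_apply, mul_comm]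

lemma smul_vmv (c : ℝ) (a b : Fin N → ℝ) : vecMulVec (c • a) b = c • vecMulVec a b := by
  ext i j; simp [vecMulVec_apply, mul_assoc]

lemma vmv_smul (c : ℝ) (a b : Fin N → ℝ) : vecMulVec a (c • b) = c • vecMulVec a b := by
  ext i j; simp [vecMulVec_apply]; ring

lemma dot_shift (M : Matrix (Fin N) (Fin N) ℝ) (a w : Fin N → ℝ) :
    (M *ᵥ a) ⬝ᵥ w = a ⬝ᵥ (Mᵀ *ᵥ w) := by
  simp only [dotProduct, mulVec, dotProduct, transpose_apply, Finset.sum_mul, Finset.mul_sum]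
  rw [Finset.sum_comm]
  exact Finset.sum_congr rfl fun k _ => Finset.sum_congr rfl fun i _ => by ring


def mEps (N : ℕ) : Fin N → ℝ := fun i => if (i : ℕ) + 1 < N then 1 else -1

lemma minkDiag_eq : minkDiag N = Matrix.diagonal (mEps N) := rfl

lemma mD_transpose : (minkDiag N)ᵀ = minkDiag N := by
  rw [minkDiag_eq, diagonal_transpose]

lemma mD_mul_mD : minkDiag N * minkDiag N = 1 := by
  rw [minkDiag_eq, diagonal_mul_diagonal]
  convert Matrix.diagonal_one
  rename_i i
  by_cases h : (i : ℕ) + 1 < N <;> simp [mEps, h]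

lemma mD_mulVec (v : Fin N → ℝ) : minkDiag N *ᵥ v = fun i => mEps N i * v i := by
  rw [minkDiag_eq]
  ext i; simp [mulVec_diagonal]

lemma mD_mulVec_mulVec (v : Fin N → ℝ) : minkDiag N *ᵥ (minkDiag N *ᵥ v) = v := by
  rw [mulVec_mulVec, mD_mul_mD, one_mulVec]

lemma mEps_sq (i : Fin N) : mEps N i * mEps N i = 1 := by
  by_cases h : (i : ℕ) + 1 < N <;> simp [mEps, h]

lemma pair_symm (a b : Fin N → ℝ) : a ⬝ᵥ minkDiag N *ᵥ b = b ⬝ᵥ minkDiag N *ᵥ a := by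
  rw [dotProduct_comm, dot_shift, mD_transpose]

def lastIdx (hN : 0 < N) : Fin N := ⟨N - 1, by omega⟩

lemma mEps_last (hN : 0 < N) : mEps N (lastIdx hN) = -1 := by
  have h : ¬(N - 1 + 1 < N) := by omega
  simp [mEps, lastIdx, h]

lemma mEps_ne_last (hN : 0 < N) {i : Fin N} (h : i ≠ lastIdx hN) : mEps N i = 1 := by
  have : (i : ℕ) + 1 < N := by
    have hi := i.isLt
    have : (i : ℕ) ≠ N - 1 := fun hc => h (Fin.ext hc)
    omega
  simp [mEps, this]

lemma null_last_zero (hN : 0 < N) {u : Fin N → ℝ} (hu : u ⬝ᵥ minkDiag N *ᵥ u = 0)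
    (hl : u (lastIdx hN) = 0) : u = 0 := by
  have hsum : ∑ i, mEps N i * u i * u i = 0 := by
    rw [← hu, mD_mulVec]; simp [dotProduct, mul_comm, mul_assoc, mul_left_comm]
  have hnn : ∀ i ∈ Finset.univ, (0:ℝ) ≤ mEps N i * u i * u i := by
    intro i _
    by_cases h : i = lastIdx hN
    · subst h; simp [hl]
    · rw [mEps_ne_last hN h, one_mul]; exact mul_self_nonneg _
  have := (Finset.sum_eq_zero_iff_of_nonneg hnn).mp hsum
  funext i
  by_cases h : i = lastIdx hN
  · subst h; exact hl
  · have := this i (Finset.mem_univ i)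
    rw [mEps_ne_last hN h, one_mul] at this
    simpa using mul_self_eq_zero.mp this

lemma null_pair (hN : 0 < N) {u w : Fin N → ℝ}
    (huu : u ⬝ᵥ minkDiag N *ᵥ u = 0) (hww : w ⬝ᵥ minkDiag N *ᵥ w = 0)
    (huw : u ⬝ᵥ minkDiag N *ᵥ w = 0) :
    w (lastIdx hN) • u = u (lastIdx hN) • w := by
  set l := lastIdx hN
  have hwu : w ⬝ᵥ minkDiag N *ᵥ u = 0 := by rw [pair_symm]; exact huw
  set z : Fin N → ℝ := w l • u - u l • w with hz
  have hzz : z ⬝ᵥ minkDiag N *ᵥ z = 0 := by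
    simp only [hz, mulVec_sub, mulVec_smul, dotProduct_sub, sub_dotProduct,
      dotProduct_smul, smul_dotProduct, smul_eq_mul]
    rw [huu, hww, huw, hwu]; ring
  have hzl : z l = 0 := by simp [hz]; ring
  have := null_last_zero hN hzz hzl
  rw [sub_eq_zero] at this
  exact this

lemma cols_null {C : Matrix (Fin N) (Fin N) ℝ}
    (hnull : Cᵀ * (minkDiag N * C) = 0) (i j : Fin N) :
    (fun k => C k i) ⬝ᵥ minkDiag N *ᵥ (fun k => C k j) = 0 := by
  have h0 := congrFun (congrFun hnull i) j
  simp only [minkDiag_eq, mul_apply, Matrix.zero_apply, transpose_apply, diagonal_apply, ite_mul,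
    zero_mul, Finset.sum_ite_eq, Finset.mem_univ, if_true] at h0
  simp only [dotProduct, mD_mulVec]
  rw [← h0]

lemma skewNull (hN : 0 < N) {C : Matrix (Fin N) (Fin N) ℝ}
    (hnull : Cᵀ * (minkDiag N * C) = 0)
    (hskew : (minkDiag N * C)ᵀ = -(minkDiag N * C)) : C = 0 := by
  set l := lastIdx hN
  have hcol := cols_null hnull
  have hrel : ∀ i j : Fin N, C l j • (fun k => C k i) = C l i • (fun k => C k j) := by
    intro i j
    exact null_pair hN (hcol i i) (hcol j j) (hcol i j)
  -- entrywise skew condition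
  have hsk : ∀ k i : Fin N, mEps N k * C k i = -(mEps N i * C i k) := by
    intro k i
    have := congrFun (congrFun hskew i) k
    simp only [transpose_apply, Matrix.neg_apply, minkDiag_eq, diagonal_mul] at this
    linarith
  by_cases hrow : ∀ i, C l i = 0
  · ext k i
    have hcoli := null_last_zero hN (hcol i i) (hrow i)
    exact congrFun hcoli k
  · push_neg at hrow
    obtain ⟨j, hj⟩ := hrow
    exfalso
    -- d i := C l i / C l j ; columns: C k i = d i * C k j
    have hC : ∀ k i, C k i = (C l i / C l j) * C k j := by
      intro k i
      have := congrFun (hrel i j) k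
      simp only [Pi.smul_apply, smul_eq_mul] at this
      field_simp
      linarith [this]
    have hdl : C l l / C l j = 0 := by
      have h1 := hsk l l
      rw [hC l l] at h1
      have : mEps N l * (C l l / C l j * C l j) = 0 := by linarith
      have hε := mEps_last hN
      have : C l l / C l j * C l j = 0 := by
        rw [hε] at this; linarith
      field_simp at this
      simp [this]
    have hdall : ∀ i, C l i / C l j = 0 := by
      intro i
      have h1 := hsk l i
      rw [hC l i, hC i l, hdl, zero_mul, mul_zero, neg_zero, mEps_last hN] at h1
      have : C l i / C l j * C l j = 0 := by linarith
      field_simp at this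
      simp [this]
    have := hdall j
    rw [div_self hj] at this
    exact one_ne_zero this

lemma Dsq_cancel (X : Matrix (Fin N) (Fin N) ℝ) :
    minkDiag N * (minkDiag N * X) = X := by
  rw [← mul_assoc, mD_mul_mD, one_mul]

section Nil
variable (hN : 0 < N) {A : Matrix (Fin N) (Fin N) ℝ}
  (hAskew : (minkDiag N * A)ᵀ = -(minkDiag N * A))
include hN hAskew

lemma At_eq : Aᵀ = -(minkDiag N * A * minkDiag N) := by
  have h := hAskew
  rw [transpose_mul, mD_transpose] at h
  calc Aᵀ = Aᵀ * minkDiag N * minkDiag N := by rw [mul_assoc, mD_mul_mD, mul_one]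
    _ = -(minkDiag N * A * minkDiag N) := by rw [h, neg_mul]

lemma pow_transpose (k : ℕ) :
    (A ^ k)ᵀ = (-1 : ℝ) ^ k • (minkDiag N * A ^ k * minkDiag N) := by
  induction k with
  | zero => simp [mD_mul_mD]
  | succ n ih =>
      rw [pow_succ, transpose_mul, ih, At_eq hN hAskew, Matrix.mul_smul, Matrix.neg_mul,
        smul_neg, ← neg_smul, pow_succ]
      congr 1
      · ring
      · simp only [mul_assoc, Dsq_cancel]
        rw [← Matrix.mul_assoc A (A ^ n) (minkDiag N), ← pow_succ',
          ← Matrix.mul_assoc (A ^ n) A (minkDiag N), ← pow_succ]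

lemma halve {k : ℕ} (hk : Odd k) (h2k : A ^ (2 * k) = 0) : A ^ k = 0 := by
  apply skewNull hN (C := A ^ k)
  · rw [pow_transpose hN hAskew, Matrix.smul_mul]
    simp only [mul_assoc, Dsq_cancel]
    rw [← pow_add, ← two_mul, h2k, Matrix.mul_zero, smul_zero]
  · rw [transpose_mul, mD_transpose, pow_transpose hN hAskew, hk.neg_one_pow, neg_smul, one_smul,
      Matrix.neg_mul]
    simp only [mul_assoc, mD_mul_mD, mul_one]

lemma sq_zero (h : A ^ 2 = 0) : A = 0 := by
  have := halve hN hAskew (k := 1) odd_one (by simpa [two_mul, pow_succ] using h)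
  simpa using this

lemma cube_zero : ∀ m : ℕ, A ^ m = 0 → A ^ 3 = 0 := by
  intro m
  induction m using Nat.strong_induction_on with
  | _ m ih =>
    intro hm
    by_cases h3 : m ≤ 3
    · have : A ^ 3 = A ^ (3 - m) * A ^ m := by rw [← pow_add]; congr 1; omega
      rw [this, hm, Matrix.mul_zero]
    · push_neg at h3
      have hstep : A ^ (m - 1) = 0 := by
        rcases Nat.even_or_odd (m - 1) with he | ho
        · have ho2 : Odd (m - 2) := by
            rcases he with ⟨r, hr⟩
            exact ⟨r - 1, by omega⟩
          have h2 : A ^ (2 * (m - 2)) = 0 := by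
            have : A ^ (2 * (m - 2)) = A ^ (2 * (m - 2) - m) * A ^ m := by
              rw [← pow_add]; congr 1; omega
            rw [this, hm, Matrix.mul_zero]
          have hmm := halve hN hAskew ho2 h2
          have h1 : A ^ (m - 1) = A ^ (m - 2) * A := by
            rw [← pow_succ]; congr 1; omega
          rw [h1, hmm, Matrix.zero_mul]
        · have h2 : A ^ (2 * (m - 1)) = 0 := by
            have : A ^ (2 * (m - 1)) = A ^ (2 * (m - 1) - m) * A ^ m := by
              rw [← pow_add]; congr 1; omega
            rw [this, hm, Matrix.mul_zero]
          exact halve hN hAskew ho h2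
      exact ih (m - 1) (by omega) hstep

end Nil

lemma vmv_zero_left (b : Fin N → ℝ) : vecMulVec (0 : Fin N → ℝ) b = 0 := by
  ext i j; simp [vecMulVec_apply]

lemma vmv_zero_right (a : Fin N → ℝ) : vecMulVec a (0 : Fin N → ℝ) = 0 := by
  ext i j; simp [vecMulVec_apply]

lemma core (hN : 0 < N) {K : Matrix (Fin N) (Fin N) ℝ} (hK : Kᵀ = -K)
    (hnil : IsNilpotent (minkDiag N * K)) :
    ∃ x y : Fin N → ℝ, x ⬝ᵥ minkDiag N *ᵥ x = 0 ∧ x ⬝ᵥ minkDiag N *ᵥ y = 0 ∧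
      K = vecMulVec x y - vecMulVec y x := by
  obtain ⟨m, hm⟩ := hnil
  have hDA : minkDiag N * (minkDiag N * K) = K := Dsq_cancel K
  set A := minkDiag N * K with hA
  have hAskew : (minkDiag N * A)ᵀ = -(minkDiag N * A) := by rw [hDA, hK]
  have h3 : A ^ 3 = 0 := cube_zero hN hAskew m hm
  by_cases hA0 : A = 0
  · refine ⟨0, 0, by simp, by simp, ?_⟩
    rw [← hDA, hA0, Matrix.mul_zero, vmv_zero_left, sub_zero]
  · have hA2 : A ^ 2 ≠ 0 := fun h => hA0 (sq_zero hN hAskew h)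
    have hCt : (A ^ 2)ᵀ = minkDiag N * A ^ 2 * minkDiag N := by
      rw [pow_transpose hN hAskew]; norm_num
    have hnullC : (A ^ 2)ᵀ * (minkDiag N * A ^ 2) = 0 := by
      rw [hCt]
      simp only [mul_assoc, Dsq_cancel]
      rw [← pow_add]
      norm_num
      rw [show (4:ℕ) = 3 + 1 by rfl, pow_succ, h3, Matrix.zero_mul, Matrix.mul_zero]
    have hcol := cols_null hnullC
    set l := lastIdx hN with hl
    -- a nonzero entry in row l of A^2
    have hrow : ∃ j, (A ^ 2) l j ≠ 0 := by
      by_contra hall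
      push_neg at hall
      apply hA2
      ext k i
      exact congrFun (null_last_zero hN (hcol i i) (hall i)) k
    obtain ⟨j, hj⟩ := hrow
    set u : Fin N → ℝ := fun k => (A ^ 2) k j with hu
    have hul : u l ≠ 0 := hj
    -- column relations
    have hrel : ∀ i k, (A ^ 2) k i = ((A ^ 2) l i / (A ^ 2) l j) * u k := by
      intro i k
      have h0 := congrFun (null_pair hN (hcol i i) (hcol j j) (hcol i j)) k
      simp only [Pi.smul_apply, smul_eq_mul] at h0
      field_simp
      linarith [h0]
    -- symmetry of D * A^2 entrywise
    have hsymC : ∀ k i, mEps N k * (A ^ 2) k i = mEps N i * (A ^ 2) i k := by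
      intro k i
      have h0 := congrFun (congrFun hCt i) k
      simp only [transpose_apply, minkDiag_eq, diagonal_mul, mul_diagonal] at h0
      calc mEps N k * (A ^ 2) k i = mEps N k * (mEps N i * (A ^ 2) i k * mEps N k) := by
              rw [← h0]
        _ = (mEps N k * mEps N k) * (mEps N i * (A ^ 2) i k) := by ring
        _ = mEps N i * (A ^ 2) i k := by rw [mEps_sq, one_mul]
    set μ : ℝ := -((A ^ 2) l l / (A ^ 2) l j) / u l with hμ
    have hd : ∀ i, (A ^ 2) l i / (A ^ 2) l j = μ * (mEps N i * u i) := by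
      intro i
      have h0 := hsymC l i
      rw [hrel i l, hrel l i, mEps_last hN] at h0
      -- h0 : -1 * (d i * u l) = mEps N i * (d l * u i)
      rw [hμ, div_mul_eq_mul_div, eq_div_iff hul]
      linear_combination (-1 : ℝ) * h0
    have hCeq : A ^ 2 = μ • vecMulVec u (minkDiag N *ᵥ u) := by
      ext k i
      rw [hrel i k, hd i]
      simp only [Matrix.smul_apply, vecMulVec_apply, smul_eq_mul, mD_mulVec]
      ring
    have hμt : μ * (mEps N j * u j) = 1 := by
      rw [← hd j, div_self hj]
    -- construction of the null rotation
    set v0 : Fin N → ℝ := Pi.single j 1 with hv0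
    have hCu : A ^ 2 *ᵥ v0 = u := by
      ext k; simp [hv0, mulVec_single, hu]
    set a1 : Fin N → ℝ := A *ᵥ v0 with ha1
    have hAu : A *ᵥ u = 0 := by
      rw [← hCu, mulVec_mulVec, ← pow_succ', h3, zero_mulVec]
    have ha1u : A *ᵥ a1 = u := by
      rw [ha1, mulVec_mulVec, ← pow_two, hCu]
    set b : Fin N → ℝ := (-μ) • a1 with hb
    have hAb : A *ᵥ b = (-μ) • u := by
      rw [hb, mulVec_smul, ha1u]
    have huu : u ⬝ᵥ minkDiag N *ᵥ u = 0 := hcol j j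
    have hu_a1 : u ⬝ᵥ minkDiag N *ᵥ a1 = 0 := by
      have hM : (A ^ 2)ᵀ * (minkDiag N * A) = 0 := by
        rw [hCt]
        simp only [mul_assoc, Dsq_cancel]
        rw [← pow_succ, h3, Matrix.mul_zero]
      calc u ⬝ᵥ minkDiag N *ᵥ a1 = (A ^ 2 *ᵥ v0) ⬝ᵥ ((minkDiag N * A) *ᵥ v0) := by
            rw [hCu, ha1, mulVec_mulVec]
        _ = v0 ⬝ᵥ (((A ^ 2)ᵀ * (minkDiag N * A)) *ᵥ v0) := by
            rw [dot_shift, mulVec_mulVec]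
        _ = 0 := by rw [hM, zero_mulVec, dotProduct_zero]
    have ha1a1 : a1 ⬝ᵥ minkDiag N *ᵥ a1 = -(mEps N j * u j) := by
      have hM2 : Aᵀ * (minkDiag N * A) = -(minkDiag N * A ^ 2) := by
        rw [At_eq hN hAskew]
        simp only [Matrix.neg_mul, mul_assoc, Dsq_cancel]
        rw [← pow_two]
      calc a1 ⬝ᵥ minkDiag N *ᵥ a1 = (A *ᵥ v0) ⬝ᵥ ((minkDiag N * A) *ᵥ v0) := by
            rw [ha1, mulVec_mulVec]
        _ = v0 ⬝ᵥ ((Aᵀ * (minkDiag N * A)) *ᵥ v0) := by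
            rw [dot_shift, mulVec_mulVec]
        _ = v0 ⬝ᵥ (-(minkDiag N * A ^ 2) *ᵥ v0) := by rw [hM2]
        _ = -(v0 ⬝ᵥ (minkDiag N *ᵥ (A ^ 2 *ᵥ v0))) := by
            rw [neg_mulVec, dotProduct_neg, ← mulVec_mulVec]
        _ = -(mEps N j * u j) := by
            rw [hCu, mD_mulVec, hv0]
            simp [single_dotProduct]
    have hub : u ⬝ᵥ minkDiag N *ᵥ b = 0 := by
      rw [hb, mulVec_smul, dotProduct_smul, hu_a1, smul_zero]
    have hbu : b ⬝ᵥ minkDiag N *ᵥ u = 0 := by rw [pair_symm]; exact hub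
    have hbb : b ⬝ᵥ minkDiag N *ᵥ b = -μ := by
      rw [hb, mulVec_smul, dotProduct_smul, smul_dotProduct, ha1a1, smul_eq_mul, smul_eq_mul]
      linear_combination (-μ : ℝ) * hμt
    obtain ⟨Nm, hNm⟩ : ∃ X : Matrix (Fin N) (Fin N) ℝ,
        X = vecMulVec u (minkDiag N *ᵥ b) - vecMulVec b (minkDiag N *ᵥ u) := ⟨_, rfl⟩
    have hAtDb : Aᵀ *ᵥ (minkDiag N *ᵥ b) = μ • (minkDiag N *ᵥ u) := by
      rw [At_eq hN hAskew, neg_mulVec, mulVec_mulVec]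
      have h5 : minkDiag N * A * minkDiag N * minkDiag N = minkDiag N * A := by
        rw [mul_assoc, mD_mul_mD, mul_one]
      rw [h5, ← mulVec_mulVec, hAb, mulVec_smul, neg_smul, neg_neg]
    have hAtDu : Aᵀ *ᵥ (minkDiag N *ᵥ u) = 0 := by
      rw [At_eq hN hAskew, neg_mulVec, mulVec_mulVec]
      have h5 : minkDiag N * A * minkDiag N * minkDiag N = minkDiag N * A := by
        rw [mul_assoc, mD_mul_mD, mul_one]
      rw [h5, ← mulVec_mulVec, hAu, mulVec_zero, neg_zero]
    have hAN : A * Nm = μ • vecMulVec u (minkDiag N *ᵥ u) := by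
      rw [hNm, Matrix.mul_sub, mul_vmv, mul_vmv, hAu, hAb, vmv_zero_left,
        smul_vmv, neg_smul, zero_sub, neg_neg]
    have hNA : Nm * A = μ • vecMulVec u (minkDiag N *ᵥ u) := by
      rw [hNm, Matrix.sub_mul, vmv_mul, vmv_mul, hAtDb, hAtDu, vmv_zero_right,
        vmv_smul, sub_zero]
    have s1 : (minkDiag N *ᵥ b) ⬝ᵥ u = 0 := by rw [dot_shift, mD_transpose]; exact hbu
    have s2 : (minkDiag N *ᵥ b) ⬝ᵥ b = -μ := by rw [dot_shift, mD_transpose]; exact hbb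
    have s3 : (minkDiag N *ᵥ u) ⬝ᵥ u = 0 := by rw [dot_shift, mD_transpose]; exact huu
    have s4 : (minkDiag N *ᵥ u) ⬝ᵥ b = 0 := by rw [dot_shift, mD_transpose]; exact hub
    have hNN : Nm * Nm = μ • vecMulVec u (minkDiag N *ᵥ u) := by
      rw [hNm, Matrix.sub_mul, Matrix.mul_sub, Matrix.mul_sub,
        vmv_mul_vmv, vmv_mul_vmv, vmv_mul_vmv, vmv_mul_vmv, s1, s2, s3, s4,
        zero_smul, zero_smul, zero_smul, neg_smul]
      simp
    have hA2eq : A * A = μ • vecMulVec u (minkDiag N *ᵥ u) := by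
      rw [← pow_two, hCeq]
    obtain ⟨B, hB⟩ : ∃ X : Matrix (Fin N) (Fin N) ℝ, X = A - Nm := ⟨_, rfl⟩
    have hB2 : B * B = 0 := by
      rw [hB, Matrix.sub_mul, Matrix.mul_sub, Matrix.mul_sub, hA2eq, hAN, hNA, hNN]
      simp
    have hDNm : minkDiag N * Nm =
        vecMulVec (minkDiag N *ᵥ u) (minkDiag N *ᵥ b)
          - vecMulVec (minkDiag N *ᵥ b) (minkDiag N *ᵥ u) := by
      rw [hNm, Matrix.mul_sub, mul_vmv, mul_vmv]
    have hDNmT : (minkDiag N * Nm)ᵀ = -(minkDiag N * Nm) := by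
      rw [hDNm, transpose_sub, vmv_transpose, vmv_transpose, neg_sub]
    have hBskew : (minkDiag N * B)ᵀ = -(minkDiag N * B) := by
      rw [hB, Matrix.mul_sub, transpose_sub, hAskew, hDNmT]
      abel
    have hBnull : Bᵀ * (minkDiag N * B) = 0 := by
      have h6 := hBskew
      rw [transpose_mul, mD_transpose] at h6
      calc Bᵀ * (minkDiag N * B) = Bᵀ * minkDiag N * B := by rw [mul_assoc]
        _ = -(minkDiag N * B) * B := by rw [h6]
        _ = -(minkDiag N * (B * B)) := by rw [Matrix.neg_mul, mul_assoc]
        _ = 0 := by rw [hB2, Matrix.mul_zero, neg_zero]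
    have hB0 : B = 0 := skewNull hN hBnull hBskew
    have hANm : A = Nm := by
      rw [hB] at hB0
      exact sub_eq_zero.mp hB0
    refine ⟨minkDiag N *ᵥ u, minkDiag N *ᵥ b, ?_, ?_, ?_⟩
    · rw [mD_mulVec_mulVec, dot_shift, mD_transpose]; exact huu
    · rw [mD_mulVec_mulVec, dot_shift, mD_transpose]; exact hub
    · rw [← hDA, hANm, hDNm]

lemma matConjPow (P X : Matrix (Fin N) (Fin N) ℝ) (hPu : IsUnit P.det) (n : ℕ) :
    (P * X * P⁻¹) ^ n = P * X ^ n * P⁻¹ := by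
  induction n with
  | zero => simp [Matrix.mul_nonsing_inv _ hPu]
  | succ k ih =>
      rw [pow_succ, ih, pow_succ]
      calc P * X ^ k * P⁻¹ * (P * X * P⁻¹) = P * X ^ k * (P⁻¹ * (P * (X * P⁻¹))) := by
            simp only [mul_assoc]
        _ = P * X ^ k * (X * P⁻¹) := by rw [Matrix.nonsing_inv_mul_cancel_left _ _ hPu]
        _ = P * (X ^ k * X) * P⁻¹ := by simp only [mul_assoc]
  -- done

lemma matConjNilp (P X : Matrix (Fin N) (Fin N) ℝ) (hPu : IsUnit P.det)
    (h : IsNilpotent (P * X * P⁻¹)) : IsNilpotent X := by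
  obtain ⟨n, hn⟩ := h
  refine ⟨n, ?_⟩
  rw [matConjPow P X hPu n] at hn
  have := congrArg (fun M => P⁻¹ * M * P) hn
  simpa [Matrix.mul_zero, Matrix.zero_mul, mul_assoc,
    Matrix.nonsing_inv_mul_cancel_left _ _ hPu,
    Matrix.nonsing_inv_mul_cancel_right _ _ hPu] using this

lemma pair_symm' {M : Matrix (Fin N) (Fin N) ℝ} (hM : Mᵀ = M) (a b : Fin N → ℝ) :
    a ⬝ᵥ M *ᵥ b = b ⬝ᵥ M *ᵥ a := by
  rw [dotProduct_comm, dot_shift, hM]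

/-- **Proposition C.4** (`prop:vsibv`): a bivector `K` (skew-symmetric bilinear form)
on Minkowski space has vanishing zeroth-order scalar invariants — i.e. `η⁻¹K` is
nilpotent — if and only if it is of alignment type II, i.e. `K = x yᵀ − y xᵀ` with
`x` null and `y` orthogonal to `x` (with respect to the inverse metric `η⁻¹`). -/
theorem bivector_vsi_iff_type_II (N : ℕ) (η K : Matrix (Fin N) (Fin N) ℝ)
    (hηsymm : η.IsSymm)
    (hsig : ∃ P : Matrix (Fin N) (Fin N) ℝ, IsUnit P.det ∧ Pᵀ * η * P = minkDiag N)
    (hK : Kᵀ = -K) :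
    IsNilpotent (η⁻¹ * K) ↔
      ∃ x y : Fin N → ℝ, x ⬝ᵥ η⁻¹ *ᵥ x = 0 ∧ x ⬝ᵥ η⁻¹ *ᵥ y = 0 ∧
        K = vecMulVec x y - vecMulVec y x := by
  obtain ⟨P, hPu, hP⟩ := hsig
  rcases Nat.eq_zero_or_pos N with hN0 | hN
  · subst hN0
    constructor
    · intro _
      refine ⟨0, 0, by simp [dotProduct], by simp [dotProduct], ?_⟩
      ext i j; exact i.elim0
    · intro _
      exact ⟨1, by ext i j; exact i.elim0⟩
  · have hPTu : IsUnit Pᵀ.det := by rwa [Matrix.det_transpose]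
    have h1 : (Pᵀ)⁻¹ * (Pᵀ * η * P) * P⁻¹ = η := by
      rw [mul_assoc Pᵀ η P, Matrix.nonsing_inv_mul_cancel_left _ _ hPTu,
        Matrix.mul_nonsing_inv_cancel_right _ _ hPu]
    rw [hP] at h1
    have hη2 : η * (P * (minkDiag N * Pᵀ)) = 1 := by
      rw [← h1]
      calc (Pᵀ)⁻¹ * minkDiag N * P⁻¹ * (P * (minkDiag N * Pᵀ))
          = (Pᵀ)⁻¹ * (minkDiag N * (P⁻¹ * (P * (minkDiag N * Pᵀ)))) := by
            simp only [mul_assoc]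
        _ = (Pᵀ)⁻¹ * (minkDiag N * (minkDiag N * Pᵀ)) := by
            rw [Matrix.nonsing_inv_mul_cancel_left _ _ hPu]
        _ = (Pᵀ)⁻¹ * Pᵀ := by rw [Dsq_cancel]
        _ = 1 := Matrix.nonsing_inv_mul _ hPTu
    have hηinv : η⁻¹ = P * (minkDiag N * Pᵀ) := Matrix.inv_eq_right_inv hη2
    constructor
    · intro hnil
      have hKey : η⁻¹ * K = P * (minkDiag N * (Pᵀ * K * P)) * P⁻¹ := by
        rw [hηinv]
        simp only [mul_assoc, Matrix.mul_nonsing_inv _ hPu, mul_one]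
      rw [hKey] at hnil
      have hnil' : IsNilpotent (minkDiag N * (Pᵀ * K * P)) := matConjNilp P _ hPu hnil
      have hK'' : (Pᵀ * K * P)ᵀ = -(Pᵀ * K * P) := by
        simp only [transpose_mul, transpose_transpose, hK, Matrix.mul_neg, Matrix.neg_mul,
          mul_assoc]
      obtain ⟨x', y', hx'x', hx'y', hKe⟩ := core hN hK'' hnil'
      refine ⟨(P⁻¹)ᵀ *ᵥ x', (P⁻¹)ᵀ *ᵥ y', ?_, ?_, ?_⟩
      · have hPx : Pᵀ *ᵥ ((P⁻¹)ᵀ *ᵥ x') = x' := by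
          rw [mulVec_mulVec, ← transpose_mul, Matrix.nonsing_inv_mul _ hPu, transpose_one,
            one_mulVec]
        rw [hηinv, ← mulVec_mulVec, ← mulVec_mulVec, hPx, dot_shift, transpose_transpose,
          mulVec_mulVec, Matrix.nonsing_inv_mul _ hPu, one_mulVec]
        exact hx'x'
      · have hPx : Pᵀ *ᵥ ((P⁻¹)ᵀ *ᵥ y') = y' := by
          rw [mulVec_mulVec, ← transpose_mul, Matrix.nonsing_inv_mul _ hPu, transpose_one,
            one_mulVec]
        rw [hηinv, ← mulVec_mulVec, ← mulVec_mulVec, hPx, dot_shift, transpose_transpose,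
          mulVec_mulVec, Matrix.nonsing_inv_mul _ hPu, one_mulVec]
        exact hx'y'
      · have hKrec : (Pᵀ)⁻¹ * (Pᵀ * K * P) * P⁻¹ = K := by
          rw [mul_assoc Pᵀ K P, Matrix.nonsing_inv_mul_cancel_left _ _ hPTu,
            Matrix.mul_nonsing_inv_cancel_right _ _ hPu]
        rw [← hKrec, hKe, Matrix.mul_sub, Matrix.sub_mul, mul_vmv, mul_vmv, vmv_mul, vmv_mul,
          ← Matrix.transpose_nonsing_inv]
    · rintro ⟨x, y, hxx, hxy, hKeq⟩
      have hMsym : (η⁻¹)ᵀ = η⁻¹ := by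
        rw [Matrix.transpose_nonsing_inv, hηsymm]
      have hyx : y ⬝ᵥ η⁻¹ *ᵥ x = 0 := by rw [pair_symm' hMsym]; exact hxy
      have hA : η⁻¹ * K = vecMulVec (η⁻¹ *ᵥ x) y - vecMulVec (η⁻¹ *ᵥ y) x := by
        rw [hKeq, Matrix.mul_sub, mul_vmv, mul_vmv]
      have hA2 : (η⁻¹ * K) * (η⁻¹ * K) =
          (-(y ⬝ᵥ η⁻¹ *ᵥ y)) • vecMulVec (η⁻¹ *ᵥ x) x := by
        rw [hA, Matrix.sub_mul, Matrix.mul_sub, Matrix.mul_sub, vmv_mul_vmv, vmv_mul_vmv,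
          vmv_mul_vmv, vmv_mul_vmv, hyx, hxx, hxy, zero_smul, zero_smul, zero_smul, neg_smul]
        simp
      refine ⟨3, ?_⟩
      rw [pow_succ, pow_two, hA2, Matrix.smul_mul, hA, Matrix.mul_sub, vmv_mul_vmv,
        vmv_mul_vmv, hxx, hxy, zero_smul, zero_smul, sub_zero, smul_zero]
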